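/- (Corollary 1: entropy decomposition.) Let n ≥ 1 and for each i = 1,…,n let pᵢ : ℝ → [0,∞) be a probability density with CDF Fᵢ assumed continuous and strictly increasing, let c : [0,1]ⁿ → [0,∞) be measurable, and suppose p(x) := c(F₁(x₁),…,Fₙ(xₙ)) ∏_{i=1}^n pᵢ(xᵢ) is a probability density on ℝⁿ whose i-th one-dimensional marginal is pᵢ. If p log p is integrable on ℝⁿ, each pᵢ log pᵢ is integrable on ℝ, and c log c is integrable on [0,1]ⁿ, then the joint differential entropy equals the sum of the marginal differential entropies plus the copula entropy: −∫_{ℝⁿ} p log p dx = Σ_{i=1}^n ( −∫_ℝ pᵢ log pᵢ dxᵢ ) + ( −∫_{[0,1]ⁿ} c log c du ). -/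

import Mathlib

open MeasureTheory

open scoped NNReal ENNReal

lemma lintegral_pi_prod {n : ℕ} (f : Fin n → ℝ → ENNReal) (hf : ∀ i, Measurable (f i)) :
    ∫⁻ x : Fin n → ℝ, ∏ i, f i (x i) = ∏ i, ∫⁻ t, f i t := by
  induction n with
  | zero => simp [volume_pi, Measure.pi_empty_univ]
  | succ n ih =>
    have h := (measurePreserving_piFinSuccAbove (fun _ : Fin (n+1) => (volume : Measure ℝ)) 0).symm
    rw [show (volume : Measure (Fin (n+1) → ℝ)) = Measure.pi (fun _ => volume) from volume_pi,
      h.lintegral_map_equiv]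
    simp_rw [MeasurableEquiv.piFinSuccAbove_symm_apply, Fin.insertNthEquiv,
      Fin.prod_univ_succ, Fin.insertNth_zero]
    simp only [Fin.zero_succAbove, Function.comp_def, Fin.cons_zero, Fin.cons_succ, cast_eq,
      Equiv.coe_fn_mk]
    rw [lintegral_prod_mul (f := f 0) (g := fun y : Fin n → ℝ => ∏ i, f i.succ (y i))
        (hf 0).aemeasurable
        ((Finset.measurable_prod _ fun i _ => (hf i.succ).comp (measurable_pi_apply i)).aemeasurable)]
    rw [show (Measure.pi fun _ : Fin n => (volume : Measure ℝ)) = volume from volume_pi.symm,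
      ih (fun i => f i.succ) (fun i => hf i.succ)]

lemma withDensity_pi_prod {n : ℕ} (f : Fin n → ℝ → ENNReal) (hf : ∀ i, Measurable (f i))
    (hσ : ∀ i, SigmaFinite (volume.withDensity (f i))) :
    (volume : Measure (Fin n → ℝ)).withDensity (fun x => ∏ i, f i (x i)) =
      Measure.pi (fun i => volume.withDensity (f i)) := by
  haveI : ∀ i, SigmaFinite (volume.withDensity (f i)) := hσ
  refine (Measure.pi_eq (μ := fun i => volume.withDensity (f i)) fun s hs => ?_).symm
  rw [withDensity_apply _ (MeasurableSet.univ_pi hs)]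
  calc ∫⁻ x in Set.univ.pi s, ∏ i, f i (x i)
      = ∫⁻ x, (Set.univ.pi s).indicator (fun y => ∏ i, f i (y i)) x := by
        rw [lintegral_indicator (MeasurableSet.univ_pi hs)]
    _ = ∫⁻ x : Fin n → ℝ, ∏ i, (s i).indicator (f i) (x i) := by
        congr 1; funext x
        by_cases hx : x ∈ Set.univ.pi s
        · rw [Set.indicator_of_mem hx]
          exact Finset.prod_congr rfl fun i _ =>
            (Set.indicator_of_mem (hx i (Set.mem_univ i)) _).symm
        · rw [Set.indicator_of_notMem hx]
          obtain ⟨i, hi⟩ : ∃ i, x i ∉ s i := by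
            simpa [Set.mem_pi] using hx
          exact (Finset.prod_eq_zero (Finset.mem_univ i)
            (Set.indicator_of_notMem hi _)).symm
    _ = ∏ i, ∫⁻ t, (s i).indicator (f i) t :=
        lintegral_pi_prod _ fun i => (hf i).indicator (hs i)
    _ = ∏ i, volume.withDensity (f i) (s i) := by
        refine Finset.prod_congr rfl fun i _ => ?_
        rw [lintegral_indicator (hs i), withDensity_apply _ (hs i)]

lemma map_cdf_withDensity (p : ℝ → ℝ) (hp_meas : Measurable p) (hp_nonneg : ∀ x, 0 ≤ p x)
    (hp_int : ∫ x, p x = 1) (F : ℝ → ℝ) (hF : ∀ x, F x = ∫ t in Set.Iic x, p t)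
    (hF_cont : Continuous F) (hF_mono : StrictMono F) :
    Measure.map F (volume.withDensity fun t => ENNReal.ofReal (p t)) =
      volume.restrict (Set.Ioo (0 : ℝ) 1) := by
  have hpi : Integrable p := by
    by_contra h
    rw [integral_undef h] at hp_int
    norm_num at hp_int
  have hF_nonneg : ∀ x, 0 ≤ F x := fun x => by
    rw [hF]; exact setIntegral_nonneg measurableSet_Iic fun t _ => hp_nonneg t
  have hF_le_one : ∀ x, F x ≤ 1 := fun x => by
    rw [hF, ← hp_int]
    exact setIntegral_le_integral hpi (Filter.Eventually.of_forall hp_nonneg)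
  have hF_pos : ∀ x, 0 < F x := fun x => by
    rcases lt_or_eq_of_le (hF_nonneg x) with h | h
    · exact h
    · exact absurd (hF_nonneg (x - 1)) (not_le.mpr (h ▸ hF_mono (by linarith)))
  have hF_lt_one : ∀ x, F x < 1 := fun x =>
    lt_of_lt_of_le (hF_mono (lt_add_one x)) (hF_le_one (x + 1))
  -- limits
  have h_tendsto_top : Filter.Tendsto (fun k : ℕ => F k) Filter.atTop (nhds 1) := by
    have h1 : Filter.Tendsto (fun k : ℕ => ∫ t in Set.Iic (k : ℝ), p t) Filter.atTop
        (nhds (∫ t in ⋃ k : ℕ, Set.Iic (k : ℝ), p t)) := by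
      refine tendsto_setIntegral_of_monotone (fun k => measurableSet_Iic)
        (fun a b hab => Set.Iic_subset_Iic.mpr (by exact_mod_cast hab)) hpi.integrableOn
    have h2 : (⋃ k : ℕ, Set.Iic (k : ℝ)) = Set.univ := by
      ext x
      simp only [Set.mem_iUnion, Set.mem_Iic, Set.mem_univ, iff_true]
      obtain ⟨k, hk⟩ := exists_nat_ge x
      exact ⟨k, hk⟩
    rw [h2] at h1
    simpa [hF, hp_int] using h1
  have h_tendsto_bot : Filter.Tendsto (fun k : ℕ => F (-(k : ℝ))) Filter.atTop (nhds 0) := by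
    have h1 : Filter.Tendsto (fun k : ℕ => ∫ t in Set.Iic (-(k : ℝ)), p t) Filter.atTop
        (nhds (∫ t in ⋂ k : ℕ, Set.Iic (-(k : ℝ)), p t)) := by
      refine tendsto_setIntegral_of_antitone (fun k => measurableSet_Iic)
        (fun a b hab => Set.Iic_subset_Iic.mpr (by exact_mod_cast neg_le_neg (Nat.cast_le.mpr hab)))
        ⟨0, hpi.integrableOn⟩
    have h2 : (⋂ k : ℕ, Set.Iic (-(k : ℝ))) = ∅ := by
      ext x
      simp only [Set.mem_iInter, Set.mem_Iic, Set.mem_empty_iff_false, iff_false, not_forall,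
        not_le]
      obtain ⟨k, hk⟩ := exists_nat_gt (-x)
      exact ⟨k, by linarith⟩
    rw [h2] at h1
    simpa [hF] using h1
  -- the withDensity measure
  set q : Measure ℝ := volume.withDensity fun t => ENNReal.ofReal (p t) with hq
  have hq_Iic : ∀ x, q (Set.Iic x) = ENNReal.ofReal (F x) := by
    intro x
    rw [hq, withDensity_apply _ measurableSet_Iic, hF,
      ← ofReal_integral_eq_lintegral_ofReal hpi.integrableOn
        (Filter.Eventually.of_forall fun t => hp_nonneg t)]
  have hq_univ : q Set.univ = 1 := by
    rw [hq, withDensity_apply _ MeasurableSet.univ, Measure.restrict_univ,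
      ← ofReal_integral_eq_lintegral_ofReal hpi
        (Filter.Eventually.of_forall fun t => hp_nonneg t), hp_int, ENNReal.ofReal_one]
  haveI : IsFiniteMeasure q := ⟨by rw [hq_univ]; exact ENNReal.one_lt_top⟩
  haveI : IsFiniteMeasure (Measure.map F q) := by
    refine ⟨?_⟩
    rw [Measure.map_apply hF_cont.measurable MeasurableSet.univ, Set.preimage_univ, hq_univ]
    exact ENNReal.one_lt_top
  refine Measure.ext_of_Iic _ _ fun y => ?_
  rw [Measure.map_apply hF_cont.measurable measurableSet_Iic,
    Measure.restrict_apply measurableSet_Iic]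
  rcases le_or_gt y 0 with hy | hy
  · have h1 : F ⁻¹' Set.Iic y = ∅ := by
      ext x
      simp only [Set.mem_preimage, Set.mem_Iic, Set.mem_empty_iff_false, iff_false, not_le]
      exact lt_of_le_of_lt hy (hF_pos x)
    have h2 : Set.Iic y ∩ Set.Ioo (0 : ℝ) 1 = ∅ := by
      ext z
      simp only [Set.mem_inter_iff, Set.mem_Iic, Set.mem_Ioo, Set.mem_empty_iff_false, iff_false]
      rintro ⟨h3, h4, -⟩
      linarith
    rw [h1, h2]
    simp
  · rcases le_or_gt 1 y with hy1 | hy1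
    · have h1 : F ⁻¹' Set.Iic y = Set.univ := by
        ext x
        simp only [Set.mem_preimage, Set.mem_Iic, Set.mem_univ, iff_true]
        exact le_trans (hF_lt_one x).le hy1
      have h2 : Set.Iic y ∩ Set.Ioo (0 : ℝ) 1 = Set.Ioo 0 1 := by
        refine Set.inter_eq_self_of_subset_right fun z hz => ?_
        exact le_trans hz.2.le hy1
      rw [h1, h2, hq_univ, Real.volume_Ioo]
      norm_num
    · -- 0 < y < 1 : find x0 with F x0 = y
      obtain ⟨a, ha⟩ : ∃ a : ℝ, F a < y := by
        rcases (h_tendsto_bot.eventually (eventually_lt_nhds hy)).exists with ⟨k, hk⟩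
        exact ⟨-(k : ℝ), hk⟩
      obtain ⟨b, hb⟩ : ∃ b : ℝ, y < F b := by
        rcases (h_tendsto_top.eventually (eventually_gt_nhds hy1)).exists with ⟨k, hk⟩
        exact ⟨(k : ℝ), hk⟩
      have hab : a ≤ b := by
        by_contra h
        exact absurd (hF_mono (not_le.mp h)) (by linarith [ha, hb] ; )
      obtain ⟨x0, -, hx0⟩ := intermediate_value_Icc hab hF_cont.continuousOn
        (Set.mem_Icc.mpr ⟨ha.le, hb.le⟩)
      have h1 : F ⁻¹' Set.Iic y = Set.Iic x0 := by
        ext x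
        simp only [Set.mem_preimage, Set.mem_Iic]
        rw [← hx0, hF_mono.le_iff_le]
      have h2 : Set.Iic y ∩ Set.Ioo (0 : ℝ) 1 = Set.Ioc 0 y := by
        ext z
        simp only [Set.mem_inter_iff, Set.mem_Iic, Set.mem_Ioo, Set.mem_Ioc]
        constructor
        · rintro ⟨h3, h4, h5⟩; exact ⟨h4, h3⟩
        · rintro ⟨h3, h4⟩; exact ⟨h4, h3, lt_of_le_of_lt h4 hy1⟩
      rw [h1, h2, hq_Iic, hx0, Real.volume_Ioc]
      norm_num

lemma entAux_integrable_wd_iff {α : Type*} [MeasurableSpace α] {μ : Measure α} {d : α → ℝ}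
    (hd : Measurable d) (hd0 : ∀ x, 0 ≤ d x) (φ : α → ℝ) :
    Integrable φ (μ.withDensity fun x => ENNReal.ofReal (d x)) ↔
      Integrable (fun x => d x * φ x) μ := by
  rw [integrable_withDensity_iff hd.ennreal_ofReal (ae_of_all _ fun x => ENNReal.ofReal_lt_top)]
  have h : (fun x => φ x * (ENNReal.ofReal (d x)).toReal) = fun x => d x * φ x := by
    funext x; rw [ENNReal.toReal_ofReal (hd0 x), mul_comm]
  rw [h]

lemma entAux_integral_wd {α : Type*} [MeasurableSpace α] (μ : Measure α) {d : α → ℝ}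
    (hd : Measurable d) (hd0 : ∀ x, 0 ≤ d x) (φ : α → ℝ) :
    ∫ x, φ x ∂(μ.withDensity fun x => ENNReal.ofReal (d x)) = ∫ x, d x * φ x ∂μ := by
  rw [show (fun x => ENNReal.ofReal (d x)) = fun x => (((fun y => (d y).toNNReal) x : ℝ≥0) : ℝ≥0∞)
      from rfl,
    integral_withDensity_eq_integral_smul
      (f := fun y => (d y).toNNReal) (measurable_real_toNNReal.comp hd) φ]
  congr 1; funext x
  rw [NNReal.smul_def, smul_eq_mul, Real.coe_toNNReal _ (hd0 x)]

lemma entAux_isFinite (p : ℝ → ℝ) (hp0 : ∀ x, 0 ≤ p x) (hpint : ∫ x, p x = 1) :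
    IsFiniteMeasure (volume.withDensity fun t => ENNReal.ofReal (p t)) := by
  have hpi : Integrable p := by
    by_contra h
    rw [integral_undef h] at hpint
    norm_num at hpint
  refine ⟨?_⟩
  rw [withDensity_apply _ MeasurableSet.univ, Measure.restrict_univ,
    ← ofReal_integral_eq_lintegral_ofReal hpi (ae_of_all _ hp0), hpint]
  simp


set_option maxHeartbeats 1000000 in
/-- **Corollary 1: entropy decomposition.** If a joint density `P` on ℝⁿ factorizes as
`P x = c (F₁ x₁, …, Fₙ xₙ) · ∏ᵢ pᵢ xᵢ`, where the `pᵢ` are the one-dimensional marginal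
densities of `P` with continuous, strictly increasing CDFs `Fᵢ`, and the relevant
`· log ·` integrands are integrable, then the joint differential entropy equals the sum of
the marginal differential entropies plus the copula entropy:
`H(P) = Σᵢ H(pᵢ) + H_c`, where `H(q) = −∫ q log q` and `H_c = −∫_{[0,1]ⁿ} c log c`. -/
theorem entropy_decomposition
    (n : ℕ) (hn : 1 ≤ n)
    (p : Fin n → ℝ → ℝ) (hp_meas : ∀ i, Measurable (p i))
    (hp_nonneg : ∀ i x, 0 ≤ p i x) (hp_int : ∀ i, ∫ x, p i x = 1)
    (F : Fin n → ℝ → ℝ) (hF : ∀ i x, F i x = ∫ t in Set.Iic x, p i t)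
    (hF_cont : ∀ i, Continuous (F i)) (hF_mono : ∀ i, StrictMono (F i))
    (c : (Fin n → ℝ) → ℝ) (hc_meas : Measurable c) (hc_nonneg : ∀ u, 0 ≤ c u)
    (P : (Fin n → ℝ) → ℝ)
    (hP : ∀ x, P x = c (fun i => F i (x i)) * ∏ i, p i (x i))
    (hP_int : ∫ x, P x = 1)
    (hmarg : ∀ i, Measure.map (fun x => x i)
        (volume.withDensity fun x => ENNReal.ofReal (P x)) =
      volume.withDensity fun t => ENNReal.ofReal (p i t))
    (hPlogP : Integrable (fun x => P x * Real.log (P x)))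
    (hplogp : ∀ i, Integrable (fun t => p i t * Real.log (p i t)))
    (hclogc : IntegrableOn (fun u => c u * Real.log (c u))
      (Set.univ.pi fun _ : Fin n => Set.Icc (0 : ℝ) 1) volume) :
    -∫ x, P x * Real.log (P x) =
      (∑ i, -∫ t, p i t * Real.log (p i t)) +
        (-∫ u in Set.univ.pi fun _ : Fin n => Set.Icc (0 : ℝ) 1,
          c u * Real.log (c u)) := by
  classical
  have hG_meas : Measurable fun x : Fin n → ℝ => fun i => F i (x i) :=
    measurable_pi_lambda _ fun i => (hF_cont i).measurable.comp (measurable_pi_apply i)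
  have hprod_meas : Measurable fun x : Fin n → ℝ => ∏ i, p i (x i) :=
    Finset.measurable_prod _ fun i _ => (hp_meas i).comp (measurable_pi_apply i)
  have hP_meas : Measurable P := by
    have h : P = fun x => c (fun i => F i (x i)) * ∏ i, p i (x i) := funext hP
    rw [h]; exact (hc_meas.comp hG_meas).mul hprod_meas
  have hP_nonneg : ∀ x, 0 ≤ P x := fun x => by
    rw [hP x]; exact mul_nonneg (hc_nonneg _) (Finset.prod_nonneg fun i _ => hp_nonneg i _)
  haveI : ∀ i, IsFiniteMeasure (volume.withDensity fun t => ENNReal.ofReal (p i t)) :=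
    fun i => entAux_isFinite (p i) (hp_nonneg i) (hp_int i)
  -- marginal parts
  have hmarg_int : ∀ i, Integrable (fun x : Fin n → ℝ => P x * Real.log (p i (x i))) := by
    intro i
    have h1 : Integrable (fun t => Real.log (p i t))
        (volume.withDensity fun t => ENNReal.ofReal (p i t)) := by
      rw [entAux_integrable_wd_iff (hp_meas i) (hp_nonneg i)]
      exact (hplogp i)
    rw [← hmarg i] at h1
    have h2 := (integrable_map_measure
      ((Real.measurable_log.comp (hp_meas i)).aestronglyMeasurable)
      (measurable_pi_apply i).aemeasurable).mp h1
    exact (entAux_integrable_wd_iff hP_meas hP_nonneg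
      (fun x : Fin n → ℝ => Real.log (p i (x i)))).mp h2
  have hmarg_eq : ∀ i, ∫ x : Fin n → ℝ, P x * Real.log (p i (x i)) =
      ∫ t, p i t * Real.log (p i t) := by
    intro i
    rw [← entAux_integral_wd volume hP_meas hP_nonneg
      (fun x : Fin n → ℝ => Real.log (p i (x i)))]
    rw [show (∫ x : Fin n → ℝ, Real.log (p i (x i))
          ∂(volume.withDensity fun x => ENNReal.ofReal (P x)))
        = ∫ t, Real.log (p i t)
          ∂(Measure.map (fun x : Fin n → ℝ => x i)
            (volume.withDensity fun x => ENNReal.ofReal (P x))) from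
      (integral_map (φ := fun x : Fin n → ℝ => x i) (f := fun t : ℝ => Real.log (p i t))
        (measurable_pi_apply i).aemeasurable
        ((Real.measurable_log.comp (hp_meas i)).aestronglyMeasurable)).symm]
    rw [hmarg i, entAux_integral_wd volume (hp_meas i) (hp_nonneg i)]
  -- copula part
  have hν_pi : (volume.withDensity fun x : Fin n → ℝ => ENNReal.ofReal (∏ i, p i (x i))) =
      Measure.pi fun i => volume.withDensity fun t => ENNReal.ofReal (p i t) := by
    rw [show (fun x : Fin n → ℝ => ENNReal.ofReal (∏ i, p i (x i)))
        = fun x => ∏ i, ENNReal.ofReal (p i (x i)) from funext fun x =>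
          ENNReal.ofReal_prod_of_nonneg fun i _ => hp_nonneg i _]
    exact withDensity_pi_prod (f := fun i t => ENNReal.ofReal (p i t))
      (fun i => (hp_meas i).ennreal_ofReal) fun i => inferInstance
  have hmapν : Measure.map (fun x : Fin n → ℝ => fun i => F i (x i))
      (volume.withDensity fun x : Fin n → ℝ => ENNReal.ofReal (∏ i, p i (x i)))
      = Measure.pi fun _ : Fin n => volume.restrict (Set.Ioo (0:ℝ) 1) := by
    rw [hν_pi]
    exact (measurePreserving_pi _ _ fun i =>
      ⟨(hF_cont i).measurable, map_cdf_withDensity (p i) (hp_meas i) (hp_nonneg i) (hp_int i)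
        (F i) (hF i) (hF_cont i) (hF_mono i)⟩).map_eq
  have hpiIoo : (Measure.pi fun _ : Fin n => volume.restrict (Set.Ioo (0:ℝ) 1)) =
      (volume : Measure (Fin n → ℝ)).restrict (Set.univ.pi fun _ => Set.Ioo 0 1) := by
    refine Measure.pi_eq fun s hs => ?_
    rw [Measure.restrict_apply (MeasurableSet.univ_pi hs), ← Set.pi_inter_distrib, volume_pi_pi]
    exact Finset.prod_congr rfl fun i _ => (Measure.restrict_apply (hs i)).symm
  have hμ_fact : (volume.withDensity fun x => ENNReal.ofReal (P x)) =
      (volume.withDensity fun x : Fin n → ℝ => ENNReal.ofReal (∏ i, p i (x i))).withDensity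
        (fun x => ENNReal.ofReal (c (fun i => F i (x i)))) := by
    have hcg : Measurable fun x : Fin n → ℝ => ENNReal.ofReal (c (fun i => F i (x i))) :=
      Measurable.ennreal_ofReal (hc_meas.comp hG_meas)
    have hpg : Measurable fun x : Fin n → ℝ => ENNReal.ofReal (∏ i, p i (x i)) :=
      Measurable.ennreal_ofReal hprod_meas
    rw [← withDensity_mul _ hpg hcg]
    congr 1
    funext x
    rw [Pi.mul_apply, hP x, mul_comm (c _) _,
      ENNReal.ofReal_mul (Finset.prod_nonneg fun i _ => hp_nonneg i _)]
  have hmapG : Measure.map (fun x : Fin n → ℝ => fun i => F i (x i))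
      (volume.withDensity fun x => ENNReal.ofReal (P x)) =
      ((volume : Measure (Fin n → ℝ)).restrict (Set.univ.pi fun _ => Set.Ioo 0 1)).withDensity
        (fun u => ENNReal.ofReal (c u)) := by
    rw [hμ_fact]
    refine Measure.ext fun s hs => ?_
    rw [Measure.map_apply hG_meas hs, withDensity_apply _ (hG_meas hs), withDensity_apply _ hs,
      ← hpiIoo, ← hmapν, setLIntegral_map hs hc_meas.ennreal_ofReal hG_meas]
  have hIoo_sub : (Set.univ.pi fun _ : Fin n => Set.Ioo (0:ℝ) 1) ⊆
      Set.univ.pi fun _ => Set.Icc 0 1 :=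
    Set.pi_mono fun i _ => Set.Ioo_subset_Icc_self
  have hnull : volume (⋃ i : Fin n,
      ({x : Fin n → ℝ | x i = 0} ∪ {x : Fin n → ℝ | x i = 1})) = 0 := by
    refine measure_iUnion_null fun i => measure_union_null ?_ ?_
    · rw [volume_pi]; exact Measure.pi_hyperplane _ i 0
    · rw [volume_pi]; exact Measure.pi_hyperplane _ i 1
  have hae : (Set.univ.pi fun _ : Fin n => Set.Icc (0:ℝ) 1)
      =ᵐ[volume] (Set.univ.pi fun _ : Fin n => Set.Ioo (0:ℝ) 1) := by
    rw [ae_eq_set]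
    constructor
    · refine measure_mono_null (fun x hx => ?_) hnull
      obtain ⟨hx1, hx2⟩ := hx
      have h3 : ∃ i, ¬(0 < x i ∧ x i < 1) := by simpa [Set.mem_pi] using hx2
      obtain ⟨i, hi⟩ := h3
      have h4 := hx1 i (Set.mem_univ i)
      obtain ⟨h5, h6⟩ := h4
      refine Set.mem_iUnion.mpr ⟨i, ?_⟩
      rcases eq_or_lt_of_le h5 with h | h
      · exact Or.inl h.symm
      · rcases eq_or_lt_of_le h6 with h' | h'
        · exact Or.inr h'
        · exact absurd ⟨h, h'⟩ hi
    · rw [Set.diff_eq_empty.mpr hIoo_sub]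
      exact measure_empty
  have hc_int_Ioo : IntegrableOn (fun u => c u * Real.log (c u))
      (Set.univ.pi fun _ : Fin n => Set.Ioo (0:ℝ) 1) volume := hclogc.mono_set hIoo_sub
  have hcop_int : Integrable (fun x : Fin n → ℝ =>
      P x * Real.log (c (fun i => F i (x i)))) := by
    have h1 : Integrable (fun u => Real.log (c u))
        (((volume : Measure (Fin n → ℝ)).restrict
          (Set.univ.pi fun _ => Set.Ioo 0 1)).withDensity fun u => ENNReal.ofReal (c u)) := by
      rw [entAux_integrable_wd_iff hc_meas hc_nonneg]
      exact hc_int_Ioo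
    rw [← hmapG] at h1
    have h2 := (integrable_map_measure
      ((Real.measurable_log.comp hc_meas).aestronglyMeasurable)
      hG_meas.aemeasurable).mp h1
    exact (entAux_integrable_wd_iff hP_meas hP_nonneg
      (fun x : Fin n → ℝ => Real.log (c (fun i => F i (x i))))).mp h2
  have hcop_eq : ∫ x : Fin n → ℝ, P x * Real.log (c (fun i => F i (x i))) =
      ∫ u in Set.univ.pi fun _ : Fin n => Set.Icc (0:ℝ) 1, c u * Real.log (c u) := by
    rw [← entAux_integral_wd volume hP_meas hP_nonneg
      (fun x : Fin n → ℝ => Real.log (c (fun i => F i (x i))))]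
    rw [show (∫ x : Fin n → ℝ, Real.log (c (fun i => F i (x i)))
          ∂(volume.withDensity fun x => ENNReal.ofReal (P x)))
        = ∫ u, Real.log (c u)
          ∂(Measure.map (fun x : Fin n → ℝ => fun i => F i (x i))
            (volume.withDensity fun x => ENNReal.ofReal (P x))) from
      (integral_map hG_meas.aemeasurable
        ((Real.measurable_log.comp hc_meas).aestronglyMeasurable)).symm]
    rw [hmapG, entAux_integral_wd _ hc_meas hc_nonneg]
    exact (setIntegral_congr_set hae).symm
  -- pointwise decomposition
  have hsplit : (fun x : Fin n → ℝ => P x * Real.log (P x)) = fun x =>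
      P x * Real.log (c (fun i => F i (x i))) + ∑ i, P x * Real.log (p i (x i)) := by
    funext x
    by_cases hx : P x = 0
    · simp [hx]
    · have hPx := hP x
      have hcne : c (fun i => F i (x i)) ≠ 0 := fun h0 => hx (by rw [hPx, h0, zero_mul])
      have hprodne : (∏ i, p i (x i)) ≠ 0 := fun h0 => hx (by rw [hPx, h0, mul_zero])
      have hfac : ∀ i ∈ Finset.univ, p i (x i) ≠ 0 := fun i _ =>
        Finset.prod_ne_zero_iff.mp hprodne i (Finset.mem_univ i)
      rw [← Finset.mul_sum, ← mul_add]
      congr 1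
      conv_lhs => rw [hPx]
      rw [Real.log_mul hcne hprodne, Real.log_prod hfac]
  have hsum_int : Integrable (fun x : Fin n → ℝ => ∑ i, P x * Real.log (p i (x i))) :=
    integrable_finset_sum _ fun i _ => hmarg_int i
  have hintegral : ∫ x, P x * Real.log (P x) =
      (∫ u in Set.univ.pi fun _ : Fin n => Set.Icc (0:ℝ) 1, c u * Real.log (c u)) +
        ∑ i, ∫ t, p i t * Real.log (p i t) := by
    rw [hsplit, integral_add hcop_int hsum_int, integral_finset_sum _ fun i _ => hmarg_int i,
      hcop_eq]
    congr 1
    exact Finset.sum_congr rfl fun i _ => hmarg_eq i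
  rw [hintegral, neg_add, ← Finset.sum_neg_distrib]
  ring
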